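/- Let Γ be a nonnegative t×u matrix whose nonzero entries are all ≥ 1, and let f be defined on the compact set 𝒜 = {X ∈ [0,1]^{t×u} : Σ X_{k,ℓ} = 1 and X_{k,ℓ} = 0 whenever Γ_{k,ℓ} = 0} by f(X) = ∏_{(k,ℓ): X_{k,ℓ}>0} (Γ_{k,ℓ}² (Σ_j X_{k,j})(Σ_i X_{i,ℓ}) / X_{k,ℓ}²)^{X_{k,ℓ}}. Then the maximum value of f on 𝒜 equals the greatest eigenvalue of ΓᵀΓ. -/

import Mathlib

open Matrix
open scoped Classical

lemma aux_rayleigh {u : ℕ} (M : Matrix (Fin u) (Fin u) ℝ) (hM : M.IsHermitian) (lam : ℝ)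
    (hub : ∀ i, hM.eigenvalues i ≤ lam) (x : Fin u → ℝ) :
    x ⬝ᵥ M *ᵥ x ≤ lam * (x ⬝ᵥ x) := by
  set b := hM.eigenvectorBasis with hb
  set v : Fin u → Fin u → ℝ := fun i j => b i j with hv
  have hMT : Mᵀ = M := by ext a b; exact hM.apply a b
  set c : Fin u → ℝ := fun i => v i ⬝ᵥ x with hc
  have hinner : ∀ y z : EuclideanSpace ℝ (Fin u), (inner ℝ y z : ℝ) = (fun j => y j) ⬝ᵥ (fun j => z j) := by
    intro y z
    simp [PiLp.inner_apply, RCLike.inner_apply, dotProduct, mul_comm]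
  set X : EuclideanSpace ℝ (Fin u) := WithLp.toLp 2 x with hX
  set Y : EuclideanSpace ℝ (Fin u) := WithLp.toLp 2 (M *ᵥ x) with hY
  have h2 : x ⬝ᵥ x = ∑ i, (c i)^2 := by
    have h := b.sum_inner_mul_inner X X
    rw [hinner] at h
    have h' : x ⬝ᵥ x = ∑ i, (inner ℝ X (b i) : ℝ) * (inner ℝ (b i) X : ℝ) := h.symm
    rw [h']
    refine Finset.sum_congr rfl fun i _ => ?_
    rw [hinner, hinner, hc, sq]
    have e1 : (fun j => X j) ⬝ᵥ (fun j => (b i) j) = x ⬝ᵥ v i := rfl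
    have e2 : (fun j => (b i) j) ⬝ᵥ (fun j => X j) = v i ⬝ᵥ x := rfl
    rw [e1, e2, dotProduct_comm x (v i)]
  have h1 : x ⬝ᵥ M *ᵥ x = ∑ i, hM.eigenvalues i * (c i)^2 := by
    have h := b.sum_inner_mul_inner X Y
    rw [hinner] at h
    have h' : x ⬝ᵥ (M *ᵥ x) = ∑ i, (inner ℝ X (b i) : ℝ) * (inner ℝ (b i) Y : ℝ) := h.symm
    rw [h']
    refine Finset.sum_congr rfl fun i _ => ?_
    rw [hinner, hinner]
    have e1 : (fun j => X j) ⬝ᵥ (fun j => (b i) j) = x ⬝ᵥ v i := rfl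
    have e2 : (fun j => (b i) j) ⬝ᵥ (fun j => Y j) = v i ⬝ᵥ (M *ᵥ x) := rfl
    rw [e1, e2]
    have key : M *ᵥ v i = hM.eigenvalues i • v i := hM.mulVec_eigenvectorBasis i
    have hsym : v i ⬝ᵥ (M *ᵥ x) = (M *ᵥ v i) ⬝ᵥ x := by
      rw [dotProduct_mulVec]
      conv_lhs => rw [← hMT, vecMul_transpose]
    rw [hsym, key, smul_dotProduct, hc, sq, dotProduct_comm x (v i), smul_eq_mul]
    ring
  rw [h1, h2, Finset.mul_sum]
  exact Finset.sum_le_sum fun i _ => by nlinarith [sq_nonneg (c i), hub i]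

lemma aux_perron {u : ℕ} (M : Matrix (Fin u) (Fin u) ℝ) (hM : M.IsHermitian)
    (hMnn : ∀ i j, 0 ≤ M i j) (lam : ℝ)
    (hray : ∀ x : Fin u → ℝ, x ⬝ᵥ M *ᵥ x ≤ lam * (x ⬝ᵥ x))
    (v₀ : Fin u → ℝ) (hv₀ : v₀ ≠ 0) (heig : M *ᵥ v₀ = lam • v₀) :
    ∃ v : Fin u → ℝ, (∀ i, 0 ≤ v i) ∧ (∑ i, v i ^ 2) = 1 ∧ M *ᵥ v = lam • v := by
  set a : Fin u → ℝ := fun i => |v₀ i| with ha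
  have haa : a ⬝ᵥ a = v₀ ⬝ᵥ v₀ := by
    simp [dotProduct, ha, ← sq, sq_abs]
  have hquad : ∀ y : Fin u → ℝ, y ⬝ᵥ M *ᵥ y = ∑ i, ∑ j, y i * M i j * y j := by
    intro y
    simp [dotProduct, mulVec, Finset.mul_sum, mul_assoc]
  have hge : v₀ ⬝ᵥ M *ᵥ v₀ ≤ a ⬝ᵥ M *ᵥ a := by
    rw [hquad, hquad]
    refine Finset.sum_le_sum fun i _ => Finset.sum_le_sum fun j _ => ?_
    calc v₀ i * M i j * v₀ j ≤ |v₀ i * M i j * v₀ j| := le_abs_self _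
    _ = a i * M i j * a j := by
        rw [abs_mul, abs_mul, abs_of_nonneg (hMnn i j)]
  have hv0quad : v₀ ⬝ᵥ M *ᵥ v₀ = lam * (v₀ ⬝ᵥ v₀) := by
    rw [heig, dotProduct_smul, smul_eq_mul]
  have heq : a ⬝ᵥ M *ᵥ a = lam * (a ⬝ᵥ a) := by
    have := hray a
    rw [haa] at *
    linarith [hge, hv0quad]
  -- N = lam • 1 - M is PSD with quadratic form vanishing at a
  set N : Matrix (Fin u) (Fin u) ℝ := lam • (1 : Matrix (Fin u) (Fin u) ℝ) - M with hN
  have hNmul : ∀ y : Fin u → ℝ, N *ᵥ y = lam • y - M *ᵥ y := by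
    intro y
    rw [hN, sub_mulVec, smul_mulVec, one_mulVec]
  have hNpsd : N.PosSemidef := by
    refine PosSemidef.of_dotProduct_mulVec_nonneg ?_ ?_
    · show Nᴴ = N
      ext i j
      simp only [hN, conjTranspose_apply, Matrix.sub_apply, Matrix.smul_apply, one_apply, star_trivial,
        smul_eq_mul]
      have hsymm : M j i = M i j := by simpa using hM.apply i j
      rw [hsymm]
      by_cases h : i = j <;> simp [h, eq_comm]
    · intro x
      have := hray x
      rw [hNmul]
      simp only [star_trivial, dotProduct_sub, dotProduct_smul, smul_eq_mul]
      linarith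
  have hNa : N *ᵥ a = 0 := by
    rw [← hNpsd.dotProduct_mulVec_zero_iff]
    rw [star_trivial, hNmul, dotProduct_sub, dotProduct_smul, smul_eq_mul, heq]
    ring
  have hMa : M *ᵥ a = lam • a := by
    have := hNa
    rw [hNmul] at this
    linear_combination (norm := module) -this
  have hapos : 0 < ∑ i, a i ^ 2 := by
    rcases Function.ne_iff.mp hv₀ with ⟨i, hi⟩
    have : 0 < a i ^ 2 := pow_pos (abs_pos.mpr hi) 2
    exact Finset.sum_pos' (fun j _ => sq_nonneg _) ⟨i, Finset.mem_univ i, this⟩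
  set s := Real.sqrt (∑ i, a i ^ 2) with hs
  have hspos : 0 < s := Real.sqrt_pos.mpr hapos
  refine ⟨s⁻¹ • a, fun i => by
    simp only [Pi.smul_apply, smul_eq_mul]
    positivity, ?_, ?_⟩
  · simp only [Pi.smul_apply, smul_eq_mul, mul_pow, ← Finset.mul_sum]
    rw [inv_pow, hs, Real.sq_sqrt hapos.le]
    field_simp
  · rw [mulVec_smul, hMa, smul_comm]

lemma aux_ub {t u : ℕ} (Γ : Matrix (Fin t) (Fin u) ℝ)
    (hΓ0 : ∀ k ℓ, 0 ≤ Γ k ℓ) (lam : ℝ) (hlam0 : 0 ≤ lam)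
    (hray : ∀ x : Fin u → ℝ, x ⬝ᵥ (Γᵀ * Γ) *ᵥ x ≤ lam * (x ⬝ᵥ x))
    (X : Matrix (Fin t) (Fin u) ℝ) (hX0 : ∀ k ℓ, 0 ≤ X k ℓ)
    (hXsum : (∑ k, ∑ ℓ, X k ℓ) = 1) :
    ∏ p ∈ Finset.univ.filter (fun p : Fin t × Fin u => 0 < X p.1 p.2),
      Real.rpow (Γ p.1 p.2 ^ 2 * (∑ j, X p.1 j) * (∑ i, X i p.2) / X p.1 p.2 ^ 2)
        (X p.1 p.2) ≤ lam := by
  set r : Fin t → ℝ := fun k => ∑ j, X k j with hr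
  set c : Fin u → ℝ := fun ℓ => ∑ i, X i ℓ with hc
  have hrnn : ∀ k, 0 ≤ r k := fun k => Finset.sum_nonneg fun j _ => hX0 k j
  have hcnn : ∀ ℓ, 0 ≤ c ℓ := fun ℓ => Finset.sum_nonneg fun i _ => hX0 i ℓ
  have hrsum : ∑ k, r k = 1 := hXsum
  have hcsum : ∑ ℓ, c ℓ = 1 := by
    have : ∑ ℓ, ∑ i, X i ℓ = ∑ k, ∑ j, X k j := Finset.sum_comm
    calc ∑ ℓ, c ℓ = ∑ ℓ, ∑ i, X i ℓ := rfl
    _ = ∑ k, ∑ j, X k j := this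
    _ = 1 := hrsum
  set S := Finset.univ.filter (fun p : Fin t × Fin u => 0 < X p.1 p.2) with hS
  set w : Fin t × Fin u → ℝ := fun p => X p.1 p.2 with hw
  set bf : Fin t × Fin u → ℝ := fun p => Γ p.1 p.2 * Real.sqrt (r p.1 * c p.2) with hbf
  have hbfnn : ∀ p, 0 ≤ bf p := fun p => mul_nonneg (hΓ0 _ _) (Real.sqrt_nonneg _)
  set q : Fin t × Fin u → ℝ := fun p => bf p / w p with hq
  have hqnn : ∀ p, 0 ≤ q p := fun p => div_nonneg (hbfnn p) (hX0 _ _)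
  have hwS : ∑ p ∈ S, w p = 1 := by
    have h1 : ∑ p ∈ S, w p = ∑ p, w p :=
      Finset.sum_subset (Finset.filter_subset _ _)
        (fun p _ hp => by
          have := hX0 p.1 p.2
          have h2 : ¬ 0 < X p.1 p.2 := by simpa [hS] using hp
          simpa [hw] using le_antisymm (not_lt.mp h2) this)
    rw [h1]
    calc ∑ p : Fin t × Fin u, w p = ∑ k, ∑ ℓ, X k ℓ := Fintype.sum_prod_type _
    _ = 1 := hrsum
  -- f X = g ^ 2 where g = ∏ q ^ w
  set g := ∏ p ∈ S, q p ^ (w p) with hg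
  have hgnn : 0 ≤ g := Finset.prod_nonneg fun p _ => Real.rpow_nonneg (hqnn p) _
  have hfg : ∏ p ∈ S, Real.rpow (Γ p.1 p.2 ^ 2 * r p.1 * c p.2 / X p.1 p.2 ^ 2) (w p)
      = g ^ 2 := by
    rw [hg, ← Finset.prod_pow]
    refine Finset.prod_congr rfl fun p hp => ?_
    have hXp : 0 < X p.1 p.2 := by simpa [hS] using hp
    have hbase : Γ p.1 p.2 ^ 2 * r p.1 * c p.2 / X p.1 p.2 ^ 2 = q p ^ 2 := by
      rw [hq, hw, hbf, div_pow, mul_pow, Real.sq_sqrt (mul_nonneg (hrnn p.1) (hcnn p.2))]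
      ring
    rw [hbase]
    show (q p ^ 2) ^ (w p) = (q p ^ (w p)) ^ 2
    rw [← Real.rpow_natCast (q p) 2, ← Real.rpow_natCast (q p ^ w p) 2,
      ← Real.rpow_mul (hqnn p), ← Real.rpow_mul (hqnn p)]
    norm_num [mul_comm]
  have hgle : g ≤ ∑ p ∈ S, bf p := by
    calc g ≤ ∑ p ∈ S, w p * q p :=
      Real.geom_mean_le_arith_mean_weighted S w q (fun p _ => hX0 _ _) hwS (fun p _ => hqnn p)
    _ = ∑ p ∈ S, bf p := by
      refine Finset.sum_congr rfl fun p hp => ?_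
      have hXp : 0 < X p.1 p.2 := by simpa [hS] using hp
      rw [hq, hw, mul_div_cancel₀ _ (ne_of_gt hXp)]
  have hSle : ∑ p ∈ S, bf p ≤ ∑ p, bf p :=
    Finset.sum_le_sum_of_subset_of_nonneg (Finset.filter_subset _ _) fun p _ _ => hbfnn p
  have hbfsum : (∑ p, bf p) ^ 2 ≤ lam := by
    have e1 : ∑ p, bf p = (fun k => Real.sqrt (r k)) ⬝ᵥ Γ *ᵥ (fun ℓ => Real.sqrt (c ℓ)) := by
      rw [Fintype.sum_prod_type]
      simp only [dotProduct, mulVec, hbf, Finset.mul_sum]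
      refine Finset.sum_congr rfl fun k _ => Finset.sum_congr rfl fun ℓ _ => ?_
      rw [Real.sqrt_mul (hrnn k)]
      ring
    have cs := Finset.sum_mul_sq_le_sq_mul_sq Finset.univ
      (fun k => Real.sqrt (r k)) (fun k => (Γ *ᵥ (fun ℓ => Real.sqrt (c ℓ))) k)
    have e2 : ∑ k, Real.sqrt (r k) ^ 2 = 1 := by
      rw [← hrsum]; exact Finset.sum_congr rfl fun k _ => Real.sq_sqrt (hrnn k)
    have e3 : ∑ k, ((Γ *ᵥ (fun ℓ => Real.sqrt (c ℓ))) k) ^ 2 ≤ lam := by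
      set sc : Fin u → ℝ := fun ℓ => Real.sqrt (c ℓ) with hsc
      have e4 : ∑ k, ((Γ *ᵥ sc) k) ^ 2 = sc ⬝ᵥ (Γᵀ * Γ) *ᵥ sc := by
        rw [← mulVec_mulVec, dotProduct_mulVec, vecMul_transpose]
        simp [dotProduct, sq]
      have e5 : sc ⬝ᵥ sc = 1 := by
        rw [← hcsum]
        refine Finset.sum_congr rfl fun ℓ _ => ?_
        show Real.sqrt (c ℓ) * Real.sqrt (c ℓ) = c ℓ
        exact Real.mul_self_sqrt (hcnn ℓ)
      calc ∑ k, ((Γ *ᵥ sc) k) ^ 2 = sc ⬝ᵥ (Γᵀ * Γ) *ᵥ sc := e4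
      _ ≤ lam * (sc ⬝ᵥ sc) := hray sc
      _ = lam := by rw [e5, mul_one]
    calc (∑ p, bf p)^2 = ((fun k => Real.sqrt (r k)) ⬝ᵥ Γ *ᵥ (fun ℓ => Real.sqrt (c ℓ)))^2 := by
          rw [e1]
    _ ≤ (∑ k, Real.sqrt (r k) ^ 2) * (∑ k, ((Γ *ᵥ (fun ℓ => Real.sqrt (c ℓ))) k) ^ 2) := by
      simpa [dotProduct] using cs
    _ ≤ 1 * lam := by
      rw [e2, one_mul, one_mul]
      exact e3
    _ = lam := one_mul lam
  calc ∏ p ∈ S, Real.rpow (Γ p.1 p.2 ^ 2 * (∑ j, X p.1 j) * (∑ i, X i p.2) / X p.1 p.2 ^ 2)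
        (X p.1 p.2) = g ^ 2 := hfg
  _ ≤ (∑ p ∈ S, bf p) ^ 2 := by
      have hSnn : 0 ≤ ∑ p ∈ S, bf p := Finset.sum_nonneg fun p _ => hbfnn p
      exact pow_le_pow_left₀ hgnn hgle 2
  _ ≤ (∑ p, bf p) ^ 2 := by
      have hSnn : 0 ≤ ∑ p ∈ S, bf p := Finset.sum_nonneg fun p _ => hbfnn p
      exact pow_le_pow_left₀ hSnn hSle 2
  _ ≤ lam := hbfsum

lemma aux_mem {t u : ℕ} (Γ : Matrix (Fin t) (Fin u) ℝ)
    (hΓ0 : ∀ k ℓ, 0 ≤ Γ k ℓ) (lam : ℝ) (hlampos : 0 < lam)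
    (v : Fin u → ℝ) (hvnn : ∀ ℓ, 0 ≤ v ℓ) (hvunit : ∑ ℓ, v ℓ ^ 2 = 1)
    (heig : (Γᵀ * Γ) *ᵥ v = lam • v) :
    ∃ X : Matrix (Fin t) (Fin u) ℝ, (∀ k ℓ, 0 ≤ X k ℓ) ∧ (∑ k, ∑ ℓ, X k ℓ) = 1 ∧
      (∀ k ℓ, Γ k ℓ = 0 → X k ℓ = 0) ∧
      (∏ p ∈ Finset.univ.filter (fun p : Fin t × Fin u => 0 < X p.1 p.2),
        Real.rpow (Γ p.1 p.2 ^ 2 * (∑ j, X p.1 j) * (∑ i, X i p.2) / X p.1 p.2 ^ 2)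
          (X p.1 p.2)) = lam := by
  set σ := Real.sqrt lam with hσ
  have hσpos : 0 < σ := Real.sqrt_pos.mpr hlampos
  have hσ2 : σ ^ 2 = lam := Real.sq_sqrt hlampos.le
  have hσne : σ ≠ 0 := ne_of_gt hσpos
  set wv : Fin t → ℝ := fun k => (Γ *ᵥ v) k / σ with hwv
  have hwnn : ∀ k, 0 ≤ wv k := by
    intro k
    have h1 : 0 ≤ (Γ *ᵥ v) k := by
      show (0:ℝ) ≤ ∑ j, Γ k j * v j
      exact Finset.sum_nonneg fun j _ => mul_nonneg (hΓ0 k j) (hvnn j)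
    exact div_nonneg h1 hσpos.le
  have hΓv : ∀ k, (Γ *ᵥ v) k = σ * wv k := fun k => by
    rw [hwv]; field_simp
  have hwv' : wv = σ⁻¹ • (Γ *ᵥ v) := by
    ext k; simp [hwv, div_eq_inv_mul]
  have hMv : Γᵀ *ᵥ (Γ *ᵥ v) = lam • v := by
    rw [mulVec_mulVec]; exact heig
  have hGtw : Γᵀ *ᵥ wv = σ • v := by
    rw [hwv', mulVec_smul, hMv, smul_smul]
    congr 1
    rw [← hσ2]
    field_simp [sq]
  have hΓvΓv : (Γ *ᵥ v) ⬝ᵥ (Γ *ᵥ v) = lam := by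
    have e4 : (Γ *ᵥ v) ⬝ᵥ (Γ *ᵥ v) = v ⬝ᵥ (Γᵀ * Γ) *ᵥ v := by
      conv_rhs => rw [← mulVec_mulVec, dotProduct_mulVec, vecMul_transpose]
    rw [e4, heig, dotProduct_smul, smul_eq_mul]
    have : v ⬝ᵥ v = 1 := by
      rw [← hvunit]; exact Finset.sum_congr rfl fun ℓ _ => (sq (v ℓ)).symm
    rw [this, mul_one]
  have hsumw : ∑ k, wv k ^ 2 = 1 := by
    have : ∑ k, wv k ^ 2 = (∑ k, (Γ *ᵥ v) k * (Γ *ᵥ v) k) / σ ^ 2 := by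
      rw [Finset.sum_div]
      exact Finset.sum_congr rfl fun k _ => by rw [hwv]; field_simp [sq]
    rw [this]
    have : ∑ k, (Γ *ᵥ v) k * (Γ *ᵥ v) k = lam := hΓvΓv
    rw [this, hσ2, div_self (ne_of_gt hlampos)]
  set X : Matrix (Fin t) (Fin u) ℝ := fun k ℓ => wv k * Γ k ℓ * v ℓ / σ with hX
  have hX0 : ∀ k ℓ, 0 ≤ X k ℓ := fun k ℓ =>
    div_nonneg (mul_nonneg (mul_nonneg (hwnn k) (hΓ0 k ℓ)) (hvnn ℓ)) hσpos.le
  have hrow : ∀ k, ∑ ℓ, X k ℓ = wv k ^ 2 := by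
    intro k
    have h1 : ∑ ℓ, X k ℓ = wv k * (∑ ℓ, Γ k ℓ * v ℓ) / σ := by
      rw [Finset.mul_sum, Finset.sum_div]
      exact Finset.sum_congr rfl fun ℓ _ => by
        show wv k * Γ k ℓ * v ℓ / σ = wv k * (Γ k ℓ * v ℓ) / σ
        ring
    have h2 : (∑ ℓ, Γ k ℓ * v ℓ) = σ * wv k := hΓv k
    rw [h1, h2]
    field_simp [sq]
  have hcol : ∀ ℓ, ∑ k, X k ℓ = v ℓ ^ 2 := by
    intro ℓ
    have h1 : ∑ k, X k ℓ = (∑ k, Γ k ℓ * wv k) * v ℓ / σ := by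
      rw [Finset.sum_mul, Finset.sum_div]
      exact Finset.sum_congr rfl fun k _ => by
        show wv k * Γ k ℓ * v ℓ / σ = Γ k ℓ * wv k * v ℓ / σ
        ring
    have h2 : (∑ k, Γ k ℓ * wv k) = σ * v ℓ := congrFun hGtw ℓ
    rw [h1, h2]
    field_simp [sq]
  have hXsum : ∑ k, ∑ ℓ, X k ℓ = 1 := by
    rw [← hsumw]
    exact Finset.sum_congr rfl fun k _ => hrow k
  refine ⟨X, hX0, hXsum, fun k ℓ h => by rw [hX]; simp [h], ?_⟩
  set S := Finset.univ.filter (fun p : Fin t × Fin u => 0 < X p.1 p.2) with hS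
  have hbase : ∀ p ∈ S, Γ p.1 p.2 ^ 2 * (∑ j, X p.1 j) * (∑ i, X i p.2) / X p.1 p.2 ^ 2
      = lam := by
    intro p hp
    have hXp : 0 < X p.1 p.2 := by simpa [hS] using hp
    have hXp' : 0 < wv p.1 * Γ p.1 p.2 * v p.2 / σ := hXp
    have hwk : 0 < wv p.1 := by
      rcases (hwnn p.1).lt_or_eq with h | h
      · exact h
      · exfalso; rw [← h] at hXp'; simp at hXp'
    have hΓp : 0 < Γ p.1 p.2 := by
      rcases (hΓ0 p.1 p.2).lt_or_eq with h | h
      · exact h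
      · exfalso; rw [← h] at hXp'; simp at hXp'
    have hvl : 0 < v p.2 := by
      rcases (hvnn p.2).lt_or_eq with h | h
      · exact h
      · exfalso; rw [← h] at hXp'; simp at hXp'
    rw [hrow, hcol]
    have hXval : X p.1 p.2 = wv p.1 * Γ p.1 p.2 * v p.2 / σ := rfl
    rw [hXval, ← hσ2]
    field_simp
  have hprod : ∏ p ∈ S, Real.rpow (Γ p.1 p.2 ^ 2 * (∑ j, X p.1 j) * (∑ i, X i p.2)
      / X p.1 p.2 ^ 2) (X p.1 p.2) = ∏ p ∈ S, lam ^ (X p.1 p.2) := by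
    exact Finset.prod_congr rfl fun p hp => by rw [hbase p hp]; rfl
  rw [hprod, ← Real.rpow_sum_of_pos hlampos]
  have : ∑ p ∈ S, X p.1 p.2 = 1 := by
    have h1 : ∑ p ∈ S, X p.1 p.2 = ∑ p : Fin t × Fin u, X p.1 p.2 :=
      Finset.sum_subset (Finset.filter_subset _ _)
        (fun p _ hp => by
          have := hX0 p.1 p.2
          have h2 : ¬ 0 < X p.1 p.2 := by simpa [hS] using hp
          exact le_antisymm (not_lt.mp h2) this)
    rw [h1]
    calc ∑ p : Fin t × Fin u, X p.1 p.2 = ∑ k, ∑ ℓ, X k ℓ := Fintype.sum_prod_type _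
    _ = 1 := hXsum
  rw [this, Real.rpow_one]

/-- Let `Γ` be a nonzero nonnegative matrix whose nonzero entries are all `≥ 1`,
and let `f` be defined on the admissible domain
`𝒜 = {X : X ≥ 0, Σ X = 1, supp X ⊆ supp Γ}` by
`f(X) = ∏_{X k ℓ > 0} (Γ k ℓ ² (Σ_j X k j)(Σ_i X i ℓ) / X k ℓ ²)^{X k ℓ}`.
Then the maximum value of `f` on `𝒜` equals the greatest eigenvalue of `ΓᵀΓ`. -/
theorem max_f_eq_greatest_eigenvalue {t u : ℕ}
    (Γ : Matrix (Fin t) (Fin u) ℝ)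
    (hΓ0 : ∀ k ℓ, 0 ≤ Γ k ℓ)
    (hΓ1 : ∀ k ℓ, Γ k ℓ ≠ 0 → 1 ≤ Γ k ℓ)
    (hne : Γ ≠ 0) (lam : ℝ)
    (hlam : IsGreatest {μ : ℝ | ∃ v : Fin u → ℝ, v ≠ 0 ∧ (Γᵀ * Γ).mulVec v = μ • v}
      lam) :
    IsGreatest
      ((fun X : Matrix (Fin t) (Fin u) ℝ =>
          ∏ p ∈ Finset.univ.filter (fun p : Fin t × Fin u => 0 < X p.1 p.2),
            Real.rpow
              (Γ p.1 p.2 ^ 2 * (∑ j, X p.1 j) * (∑ i, X i p.2) / X p.1 p.2 ^ 2)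
              (X p.1 p.2)) ''
        {X | (∀ k ℓ, 0 ≤ X k ℓ) ∧ (∑ k, ∑ ℓ, X k ℓ) = 1 ∧
          ∀ k ℓ, Γ k ℓ = 0 → X k ℓ = 0})
      lam := by
  have hM : (Γᵀ * Γ).IsHermitian := by
    have h : Γᴴ = Γᵀ := by ext i j; simp
    have h2 := isHermitian_conjTranspose_mul_self Γ
    rwa [h] at h2
  have hub : ∀ i, hM.eigenvalues i ≤ lam := by
    intro i
    refine hlam.2 ⟨(fun j => hM.eigenvectorBasis i j), ?_, hM.mulVec_eigenvectorBasis i⟩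
    intro h0
    exact hM.eigenvectorBasis.orthonormal.ne_zero i (WithLp.ofLp_injective 2 (funext fun j => congrFun h0 j))
  have hray := aux_rayleigh (Γᵀ * Γ) hM lam hub
  have hMnn : ∀ i j, 0 ≤ (Γᵀ * Γ) i j := by
    intro i j
    rw [mul_apply]
    exact Finset.sum_nonneg fun k _ => mul_nonneg (hΓ0 k i) (hΓ0 k j)
  -- 1 ≤ lam
  have hlam1 : 1 ≤ lam := by
    have : ∃ k ℓ, Γ k ℓ ≠ 0 := by
      by_contra h
      push_neg at h
      exact hne (by ext k ℓ; simpa using h k ℓ)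
    obtain ⟨k₀, ℓ₀, hk⟩ := this
    set e : Fin u → ℝ := Pi.single ℓ₀ 1 with he
    have h1 : e ⬝ᵥ ((Γᵀ * Γ) *ᵥ e) = ∑ k, Γ k ℓ₀ ^ 2 := by
      simp [he, dotProduct, mulVec, mul_apply, Pi.single_apply, sq,
        Finset.sum_ite_eq', Finset.mul_sum]
    have h2 : e ⬝ᵥ e = 1 := by
      simp [he, dotProduct, Pi.single_apply]
    have h3 : (1:ℝ) ≤ ∑ k, Γ k ℓ₀ ^ 2 := by
      have h4 : Γ k₀ ℓ₀ ^ 2 ≤ ∑ k, Γ k ℓ₀ ^ 2 :=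
        Finset.single_le_sum (f := fun k => Γ k ℓ₀ ^ 2) (fun k _ => sq_nonneg _) (Finset.mem_univ k₀)
      have h5 : 1 ≤ Γ k₀ ℓ₀ := hΓ1 _ _ hk
      nlinarith
    have h6 := hray e
    rw [h1, h2, mul_one] at h6
    linarith
  have hlampos : 0 < lam := lt_of_lt_of_le one_pos hlam1
  obtain ⟨v₀, hv₀ne, hv₀eig⟩ := hlam.1
  obtain ⟨v, hvnn, hvunit, hveig⟩ :=
    aux_perron (Γᵀ * Γ) hM hMnn lam hray v₀ hv₀ne hv₀eig
  constructor
  · obtain ⟨X, hX0, hXsum, hsupp, hprod⟩ :=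
      aux_mem Γ hΓ0 lam hlampos v hvnn hvunit hveig
    exact ⟨X, ⟨hX0, hXsum, hsupp⟩, hprod⟩
  · rintro y ⟨X, ⟨hX0, hXsum, -⟩, rfl⟩
    exact aux_ub Γ hΓ0 lam hlampos.le hray X hX0 hXsum
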